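/- Let d be a positive squarefree integer with d ≡ 3 (mod 4), let a be a positive integer, and let ψ be a Dirichlet character modulo a. Then for every complex s with Re(s) > 0, the family over primes p ↦ (1 − ψ(p)·p^{−s} + (1 + χ(p)/p)^{−s}·ψ(p)·p^{−s}) is multipliable (the infinite product over all primes converges). -/

import Mathlib

/-- The quadratic character attached to `ℚ(√-d)`, defined on primes:
`χ(2) = (-1)^((d²-1)/8)` and `χ(p) = (-d/p)` (Legendre symbol) for odd primes `p`;
`0` off the primes. -/
noncomputable def chi (d : ℕ) (p : ℕ) : ℤ :=
  if hp : p.Prime then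
    if p = 2 then (-1) ^ ((d ^ 2 - 1) / 8)
    else @legendreSym p ⟨hp⟩ (-(d : ℤ))
  else 0

lemma abs_chi_le_one (d p : ℕ) : |chi d p| ≤ 1 := by
  unfold chi
  split_ifs with hp h2
  · simp
  · haveI : Fact p.Prime := ⟨hp⟩
    rcases eq_or_ne (((-(d : ℤ)) : ℤ) : ZMod p) 0 with h | h
    · rw [(legendreSym.eq_zero_iff p _).mpr h]; norm_num
    · rcases legendreSym.eq_one_or_neg_one p h with h1 | h1 <;> rw [h1] <;> norm_num
  · norm_num

lemma norm_cpow_real_sub_one_le {s : ℂ} {x : ℝ} (hx : |x| ≤ 1 / 2)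
    (hsx : ‖s‖ * (3 / 2 * |x|) ≤ 1) :
    ‖(((1 + x : ℝ)) : ℂ) ^ (-s) - 1‖ ≤ 3 * ‖s‖ * |x| := by
  obtain ⟨hx1, hx2⟩ := abs_le.mp hx
  have h1 : (0 : ℝ) < 1 + x := by linarith
  have hne : ((1 + x : ℝ) : ℂ) ≠ 0 := by
    exact_mod_cast h1.ne'
  rw [Complex.cpow_def_of_ne_zero hne]
  have hlog : ‖Complex.log ((1 + x : ℝ) : ℂ)‖ ≤ 3 / 2 * |x| := by
    have hc : ((1 + x : ℝ) : ℂ) = 1 + (x : ℂ) := by push_cast; ring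
    rw [hc]
    simpa using Complex.norm_log_one_add_half_le_self (z := (x : ℂ)) (by simpa using hx)
  have hz : ‖(-s) * Complex.log ((1 + x : ℝ) : ℂ)‖ ≤ ‖s‖ * (3 / 2 * |x|) := by
    rw [norm_mul, norm_neg]
    exact mul_le_mul_of_nonneg_left hlog (norm_nonneg s)
  have hz' : ‖Complex.log ((1 + x : ℝ) : ℂ) * (-s)‖ ≤ ‖s‖ * (3 / 2 * |x|) := by
    rwa [mul_comm]
  calc ‖Complex.exp (Complex.log ((1 + x : ℝ) : ℂ) * (-s)) - 1‖
      ≤ 2 * ‖Complex.log ((1 + x : ℝ) : ℂ) * (-s)‖ := by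
        have := Complex.norm_exp_sub_one_le (x := Complex.log ((1 + x : ℝ) : ℂ) * (-s))
          (hz'.trans hsx)
        simpa using this
    _ = 2 * ‖(-s) * Complex.log ((1 + x : ℝ) : ℂ)‖ := by rw [mul_comm (Complex.log _)]
    _ ≤ 2 * (‖s‖ * (3 / 2 * |x|)) := by linarith
    _ = 3 * ‖s‖ * |x| := by ring

/-- For `Re(s) > 0`, the family `p ↦ 1 - ψ(p)p^{-s} + (1 + χ(p)/p)^{-s}·ψ(p)·p^{-s}`
over the primes is multipliable. -/
theorem euler_factor_multipliable (d : ℕ) (hd : 0 < d) (hsq : Squarefree d) (hmod : d % 4 = 3)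
    (a : ℕ) (ha : 0 < a) (ψ : DirichletCharacter ℂ a) (s : ℂ) (hs : 0 < s.re) :
    Multipliable (fun p : Nat.Primes =>
      1 - ψ ((p.1 : ℕ) : ZMod a) * (p.1 : ℂ) ^ (-s) +
        ((1 + (chi d p.1 : ℚ) / (p.1 : ℚ) : ℚ) : ℂ) ^ (-s) * ψ ((p.1 : ℕ) : ZMod a) *
          (p.1 : ℂ) ^ (-s)) := by
  set F : Nat.Primes → ℂ := fun p =>
    1 - ψ ((p.1 : ℕ) : ZMod a) * (p.1 : ℂ) ^ (-s) +
      ((1 + (chi d p.1 : ℚ) / (p.1 : ℚ) : ℚ) : ℂ) ^ (-s) * ψ ((p.1 : ℕ) : ZMod a) *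
        (p.1 : ℂ) ^ (-s) with hFdef
  by_cases h0 : ∀ p, F p ≠ 0
  · -- main case : all factors nonzero, use summability of logs
    -- the "x" value for each prime
    set x : Nat.Primes → ℝ := fun p => (chi d p.1 : ℝ) / (p.1 : ℝ) with hxdef
    have hppos : ∀ p : Nat.Primes, (0 : ℝ) < (p.1 : ℝ) := fun p => by
      exact_mod_cast p.2.pos
    have hp2 : ∀ p : Nat.Primes, (2 : ℝ) ≤ (p.1 : ℝ) := fun p => by
      exact_mod_cast p.2.two_le
    have hxp : ∀ p : Nat.Primes, |x p| * (p.1 : ℝ) ≤ 1 := by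
      intro p
      have h1 : |(chi d p.1 : ℝ)| ≤ 1 := by exact_mod_cast abs_chi_le_one d p.1
      have : |x p| = |(chi d p.1 : ℝ)| / (p.1 : ℝ) := by
        rw [hxdef]; rw [abs_div, abs_of_pos (hppos p)]
      rw [this, div_mul_cancel₀ _ (hppos p).ne']
      exact h1
    have hxhalf : ∀ p : Nat.Primes, |x p| ≤ 1 / 2 := by
      intro p
      nlinarith [hxp p, hp2 p, abs_nonneg (x p)]
    -- rewrite the factor
    have hFsub : ∀ p : Nat.Primes,
        F p - 1 = (((1 + x p : ℝ) : ℂ) ^ (-s) - 1) * (ψ ((p.1 : ℕ) : ZMod a) * (p.1 : ℂ) ^ (-s)) := by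
      intro p
      have hcast : ((1 + (chi d p.1 : ℚ) / (p.1 : ℚ) : ℚ) : ℂ) = ((1 + x p : ℝ) : ℂ) := by
        rw [hxdef]; push_cast; ring
      rw [hFdef]
      simp only [hcast]
      ring
    -- summable majorant
    have hmaj : Summable (fun p : Nat.Primes => (3 : ℝ) / 2 * (3 * ‖s‖ * (p.1 : ℝ) ^ (-(1 + s.re)))) := by
      have : Summable (fun p : Nat.Primes => (p.1 : ℝ) ^ (-(1 + s.re))) :=
        Nat.Primes.summable_rpow.mpr (by linarith)
      exact (this.mul_left _).mul_left _
    -- the cutoff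
    set N : ℕ := ⌈6 * ‖s‖⌉₊ + 2 with hNdef
    have hev : ∀ᶠ p : Nat.Primes in Filter.cofinite, N ≤ p.1 := by
      rw [Filter.eventually_cofinite]
      have hfin : ((fun q : Nat.Primes => (q.1 : ℕ)) ⁻¹' Set.Iio N).Finite :=
        Set.Finite.preimage Nat.Primes.coe_nat_injective.injOn (Set.finite_Iio N)
      refine hfin.subset ?_
      intro p hp
      simpa [Set.mem_preimage] using Nat.lt_of_not_le hp
    -- conclude
    have hlogsum : Summable (fun p : Nat.Primes => Complex.log (F p)) := by
      refine Summable.of_norm_bounded_eventually hmaj ?_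
      filter_upwards [hev] with p hp
      have hpN : (6 * ‖s‖ : ℝ) ≤ (p.1 : ℝ) := by
        have h1 : (6 * ‖s‖ : ℝ) ≤ (⌈6 * ‖s‖⌉₊ : ℝ) := Nat.le_ceil _
        have h2 : ((N : ℕ) : ℝ) ≤ (p.1 : ℝ) := by exact_mod_cast hp
        have h3 : ((⌈6 * ‖s‖⌉₊ : ℕ) : ℝ) ≤ ((N : ℕ) : ℝ) := by
          exact_mod_cast Nat.le_add_right _ 2
        linarith
      -- bound on the cpow difference
      have hsx : ‖s‖ * (3 / 2 * |x p|) ≤ 1 := by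
        nlinarith [hxp p, hpN, abs_nonneg (x p), norm_nonneg s, hp2 p, hppos p]
      have hw : ‖((1 + x p : ℝ) : ℂ) ^ (-s) - 1‖ ≤ 3 * ‖s‖ * |x p| :=
        norm_cpow_real_sub_one_le (hxhalf p) hsx
      -- norms of the rest
      have hP : ‖(p.1 : ℂ) ^ (-s)‖ = (p.1 : ℝ) ^ (-s.re) := by
        have := Complex.norm_natCast_cpow_of_pos p.2.pos (-s)
        simpa using this
      have hpsi : ‖ψ ((p.1 : ℕ) : ZMod a)‖ ≤ 1 := ψ.norm_le_one _
      have hFp : ‖F p - 1‖ ≤ 3 * ‖s‖ * |x p| * (p.1 : ℝ) ^ (-s.re) := by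
        rw [hFsub p, norm_mul, norm_mul, hP]
        have h1 : ‖ψ ((p.1 : ℕ) : ZMod a)‖ * (p.1 : ℝ) ^ (-s.re) ≤ (p.1 : ℝ) ^ (-s.re) := by
          have := Real.rpow_nonneg (le_of_lt (hppos p)) (-s.re)
          nlinarith [norm_nonneg (ψ ((p.1 : ℕ) : ZMod a))]
        calc ‖((1 + x p : ℝ) : ℂ) ^ (-s) - 1‖ * (‖ψ ((p.1 : ℕ) : ZMod a)‖ * (p.1 : ℝ) ^ (-s.re))
            ≤ (3 * ‖s‖ * |x p|) * (p.1 : ℝ) ^ (-s.re) := by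
              apply mul_le_mul hw h1 (by positivity) (by positivity)
          _ = 3 * ‖s‖ * |x p| * (p.1 : ℝ) ^ (-s.re) := by ring
      -- compare with the majorant exponent
      have hsplit : (p.1 : ℝ) ^ (-(1 + s.re)) = (p.1 : ℝ)⁻¹ * (p.1 : ℝ) ^ (-s.re) := by
        rw [show -(1 + s.re) = (-1) + (-s.re) by ring, Real.rpow_add (hppos p),
          Real.rpow_neg_one]
      have hxle : |x p| ≤ (p.1 : ℝ)⁻¹ := by
        rw [← one_div]
        exact (le_div_iff₀ (hppos p)).mpr (hxp p)
      have hFp' : ‖F p - 1‖ ≤ 3 * ‖s‖ * (p.1 : ℝ) ^ (-(1 + s.re)) := by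
        rw [hsplit]
        have h2 : 3 * ‖s‖ * |x p| * (p.1 : ℝ) ^ (-s.re)
            ≤ 3 * ‖s‖ * ((p.1 : ℝ)⁻¹ * (p.1 : ℝ) ^ (-s.re)) := by
          have h0' := Real.rpow_nonneg (le_of_lt (hppos p)) (-s.re)
          nlinarith [mul_le_mul_of_nonneg_right hxle h0', norm_nonneg s]
        exact hFp.trans h2
      have hsmall : ‖F p - 1‖ ≤ 1 / 2 := by
        have h1 : (p.1 : ℝ) ^ (-s.re) ≤ 1 :=
          Real.rpow_le_one_of_one_le_of_nonpos (by linarith [hp2 p]) (by linarith)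
        have h2 : (p.1 : ℝ) ^ (-(1 + s.re)) ≤ (p.1 : ℝ)⁻¹ := by
          rw [hsplit]
          have hinv : (0 : ℝ) ≤ (p.1 : ℝ)⁻¹ := le_of_lt (inv_pos.mpr (hppos p))
          nlinarith [Real.rpow_nonneg (le_of_lt (hppos p)) (-s.re)]
        have h3 : 3 * ‖s‖ * (p.1 : ℝ)⁻¹ ≤ 1 / 2 := by
          rw [mul_inv_le_iff₀ (hppos p)]
          nlinarith
        have h4 : 3 * ‖s‖ * (p.1 : ℝ) ^ (-(1 + s.re)) ≤ 3 * ‖s‖ * (p.1 : ℝ)⁻¹ :=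
          mul_le_mul_of_nonneg_left h2 (by positivity)
        linarith
      have hlogF : ‖Complex.log (F p)‖ ≤ 3 / 2 * ‖F p - 1‖ := by
        have := Complex.norm_log_one_add_half_le_self (z := F p - 1) hsmall
        rwa [add_sub_cancel] at this
      calc ‖Complex.log (F p)‖ ≤ 3 / 2 * ‖F p - 1‖ := hlogF
        _ ≤ 3 / 2 * (3 * ‖s‖ * (p.1 : ℝ) ^ (-(1 + s.re))) := by linarith
    exact Complex.multipliable_of_summable_log hlogsum
  · -- some factor is zero : the product trivially converges to 0
    push_neg at h0
    obtain ⟨p₀, hp₀⟩ := h0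
    refine ⟨0, ?_⟩
    have hevS : ∀ᶠ S : Finset Nat.Primes in Filter.atTop, ∏ i ∈ S, F i = 0 := by
      filter_upwards [Filter.eventually_ge_atTop ({p₀} : Finset Nat.Primes)] with S hS
      exact Finset.prod_eq_zero (hS (Finset.mem_singleton_self p₀)) hp₀
    exact tendsto_const_nhds.congr' (hevS.mono fun S h => h.symm)
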